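/- Let (X, 𝔅, μ) be a probability space, b ∈ (1, ∞) finite, λ > ν ≥ 0, Δ := λ − ν, Z ≥ 0, and ψ ∈ Ψ(b). Suppose f : X → ℝ is measurable with N := sup_{p ∈ [1, b)} |f|_p / ψ(p) < ∞, and g : X → ℝ is measurable with |g|_p ≤ Z · p^λ/(p−1)^ν · |f|_p for every p ∈ (1, b). Then sup_{p ∈ [1, b)} |g|_p / ψ(p) ≤ b^Δ · Z · N · K_ν[ψ, b], i.e. g belongs to the same Grand Lebesgue Space Gψ as f. -/

import Mathlib

open MeasureTheory ENNReal Real Set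

private lemma rk_helper {b lam nu Z r : ℝ} (hnu : 0 ≤ nu) (hnulam : nu < lam) (hZ : 0 ≤ Z)
    (hr : 1 < r) (hrb : r ≤ b) :
    Z * r ^ lam / (r - 1) ^ nu ≤ b ^ (lam - nu) * Z * (r / (r - 1)) ^ nu := by
  have hr0 : (0:ℝ) < r := by linarith
  have hr1 : (0:ℝ) < r - 1 := by linarith
  have hpow : r ^ (lam - nu) * r ^ nu = r ^ lam := by
    rw [← Real.rpow_add hr0]; norm_num
  have heq : Z * r ^ lam / (r - 1) ^ nu = Z * r ^ (lam - nu) * (r / (r - 1)) ^ nu := by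
    rw [Real.div_rpow hr0.le hr1.le, ← hpow]; ring
  rw [heq]
  have h1 : r ^ (lam - nu) ≤ b ^ (lam - nu) :=
    Real.rpow_le_rpow hr0.le hrb (by linarith)
  have h2 : (0:ℝ) ≤ (r / (r - 1)) ^ nu :=
    Real.rpow_nonneg (div_nonneg (by linarith) (by linarith)) _
  calc Z * r ^ (lam - nu) * (r / (r - 1)) ^ nu
      ≤ Z * b ^ (lam - nu) * (r / (r - 1)) ^ nu :=
        mul_le_mul_of_nonneg_right (mul_le_mul_of_nonneg_left h1 hZ) h2
    _ = b ^ (lam - nu) * Z * (r / (r - 1)) ^ nu := by ring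

/-- **Remark 4.1.** For finite `b < ∞`, an operator of type `(λ, ν)` with `λ > ν ≥ 0`
acts from `Gψ` into the same space `Gψ`, with norm at most `b^Δ · Z · K_ν[ψ,b]`,
where `Δ = λ - ν` and `K_ν[ψ,b] = inf_{q ∈ (1,b)} (q/(q-1))^ν ψ(q)`. -/
theorem remark_4_1 {X : Type*} [MeasurableSpace X] (μ : Measure X) [IsProbabilityMeasure μ]
    (b : ℝ) (hb : 1 < b) (lam nu Z : ℝ) (hnu : 0 ≤ nu) (hnulam : nu < lam) (hZ : 0 ≤ Z)
    (ψ : ℝ → ℝ)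
    (hψcont : ContinuousOn ψ (Set.Ico 1 b))
    (hψone : ∀ p ∈ Set.Ico (1 : ℝ) b, 1 ≤ ψ p)
    (f g : X → ℝ) (hf : Measurable f) (hg : Measurable g)
    (hN : (⨆ (p : ℝ) (_ : p ∈ Set.Ico (1 : ℝ) b),
        eLpNorm f (ENNReal.ofReal p) μ / ENNReal.ofReal (ψ p)) < ⊤)
    (hQ : ∀ p ∈ Set.Ioo (1 : ℝ) b,
      eLpNorm g (ENNReal.ofReal p) μ ≤
        ENNReal.ofReal (Z * p ^ lam / (p - 1) ^ nu) * eLpNorm f (ENNReal.ofReal p) μ) :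
    (⨆ (p : ℝ) (_ : p ∈ Set.Ico (1 : ℝ) b),
        eLpNorm g (ENNReal.ofReal p) μ / ENNReal.ofReal (ψ p)) ≤
      ENNReal.ofReal (b ^ (lam - nu) * Z *
          sInf ((fun q : ℝ => (q / (q - 1)) ^ nu * ψ q) '' Set.Ioo 1 b)) *
        (⨆ (p : ℝ) (_ : p ∈ Set.Ico (1 : ℝ) b),
          eLpNorm f (ENNReal.ofReal p) μ / ENNReal.ofReal (ψ p)) := by
  set N := (⨆ (p : ℝ) (_ : p ∈ Set.Ico (1 : ℝ) b),
      eLpNorm f (ENNReal.ofReal p) μ / ENNReal.ofReal (ψ p)) with hNdef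
  set S := ((fun q : ℝ => (q / (q - 1)) ^ nu * ψ q) '' Set.Ioo 1 b) with hSdef
  set K := sInf S with hKdef
  set C := b ^ (lam - nu) * Z with hCdef
  have hb0 : (0:ℝ) < b := lt_trans one_pos hb
  have hC0 : 0 ≤ C := mul_nonneg (Real.rpow_nonneg hb0.le _) hZ
  -- elements of S are ≥ 1
  have hS1 : ∀ k ∈ S, (1:ℝ) ≤ k := by
    rintro k ⟨q, hq, rfl⟩
    have hq1 : (1:ℝ) < q := hq.1
    have h1 : (1:ℝ) ≤ q / (q - 1) := by
      rw [le_div_iff₀ (by linarith)]; linarith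
    have h2 : (1:ℝ) ≤ (q / (q - 1)) ^ nu := Real.one_le_rpow h1 hnu
    have h3 : (1:ℝ) ≤ ψ q := hψone q ⟨hq1.le, hq.2⟩
    nlinarith
  have hSne : S.Nonempty := ⟨_, ⟨(1 + b) / 2, ⟨by linarith, by linarith⟩, rfl⟩⟩
  have hBdd : BddBelow S := ⟨1, fun k hk => hS1 k hk⟩
  have hK1 : (1:ℝ) ≤ K := le_csInf hSne hS1
  -- bound on f
  have hfb : ∀ q ∈ Set.Ico (1:ℝ) b,
      eLpNorm f (ENNReal.ofReal q) μ ≤ ENNReal.ofReal (ψ q) * N := by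
    intro q hq
    have h1 : eLpNorm f (ENNReal.ofReal q) μ / ENNReal.ofReal (ψ q) ≤ N := by
      rw [hNdef]
      exact le_iSup₂ (f := fun (p : ℝ) (_ : p ∈ Set.Ico (1:ℝ) b) =>
        eLpNorm f (ENNReal.ofReal p) μ / ENNReal.ofReal (ψ p)) q hq
    have hψq : (0:ℝ) < ψ q := lt_of_lt_of_le one_pos (hψone q hq)
    rw [ENNReal.div_le_iff (by simp [hψq, not_le.mpr hψq]) ENNReal.ofReal_ne_top] at h1
    rwa [mul_comm] at h1
  -- the key bound
  have key : ∀ p ∈ Set.Ico (1:ℝ) b, ∀ q ∈ Set.Ioo (1:ℝ) b,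
      eLpNorm g (ENNReal.ofReal p) μ / ENNReal.ofReal (ψ p) ≤
        ENNReal.ofReal (C * ((q / (q - 1)) ^ nu * ψ q)) * N := by
    intro p hp q hq
    have hψp : (0:ℝ) < ψ p := lt_of_lt_of_le one_pos (hψone p hp)
    have hψq1 : (1:ℝ) ≤ ψ q := hψone q ⟨hq.1.le, hq.2⟩
    rw [ENNReal.div_le_iff (by simp [hψp, not_le.mpr hψp]) ENNReal.ofReal_ne_top]
    rcases le_or_gt p q with hpq | hqp
    · -- p ≤ q : use monotonicity of eLpNorm
      have step : eLpNorm g (ENNReal.ofReal p) μ ≤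
          ENNReal.ofReal (C * ((q / (q - 1)) ^ nu * ψ q)) * N := by
        calc eLpNorm g (ENNReal.ofReal p) μ
            ≤ eLpNorm g (ENNReal.ofReal q) μ :=
              eLpNorm_le_eLpNorm_of_exponent_le (ENNReal.ofReal_le_ofReal hpq)
                hg.aestronglyMeasurable
          _ ≤ ENNReal.ofReal (Z * q ^ lam / (q - 1) ^ nu) *
                eLpNorm f (ENNReal.ofReal q) μ := hQ q hq
          _ ≤ ENNReal.ofReal (Z * q ^ lam / (q - 1) ^ nu) *
                (ENNReal.ofReal (ψ q) * N) :=
              mul_le_mul_right (hfb q ⟨hq.1.le, hq.2⟩) _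
          _ = ENNReal.ofReal (Z * q ^ lam / (q - 1) ^ nu * ψ q) * N := by
              rw [ENNReal.ofReal_mul' (by linarith), mul_assoc]
          _ ≤ ENNReal.ofReal (C * ((q / (q - 1)) ^ nu * ψ q)) * N := by
              refine mul_le_mul_left (ENNReal.ofReal_le_ofReal ?_) N
              have h := rk_helper (b := b) hnu hnulam hZ hq.1 hq.2.le
              have h' := mul_le_mul_of_nonneg_right h (by linarith : (0:ℝ) ≤ ψ q)
              calc Z * q ^ lam / (q - 1) ^ nu * ψ q
                  ≤ C * (q / (q - 1)) ^ nu * ψ q := h'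
                _ = C * ((q / (q - 1)) ^ nu * ψ q) := by ring
      calc eLpNorm g (ENNReal.ofReal p) μ
          ≤ ENNReal.ofReal (C * ((q / (q - 1)) ^ nu * ψ q)) * N := step
        _ ≤ ENNReal.ofReal (C * ((q / (q - 1)) ^ nu * ψ q)) * N * ENNReal.ofReal (ψ p) :=
            le_mul_of_one_le_right' (by
              rw [show (1:ℝ≥0∞) = ENNReal.ofReal 1 by simp]
              exact ENNReal.ofReal_le_ofReal (hψone p hp))
    · -- q < p : use the bound at p directly
      have hp1 : (1:ℝ) < p := lt_trans hq.1 hqp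
      have hreal : Z * p ^ lam / (p - 1) ^ nu ≤ C * ((q / (q - 1)) ^ nu * ψ q) := by
        have h1 : Z * p ^ lam / (p - 1) ^ nu ≤ C * (p / (p - 1)) ^ nu :=
          rk_helper hnu hnulam hZ hp1 hp.2.le
        have hq1 : (1:ℝ) < q := hq.1
        have h2 : p / (p - 1) ≤ q / (q - 1) := by
          rw [div_le_div_iff₀ (by linarith) (by linarith)]
          nlinarith
        have h3 : (p / (p - 1)) ^ nu ≤ (q / (q - 1)) ^ nu :=
          Real.rpow_le_rpow (div_nonneg (by linarith) (by linarith)) h2 hnu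
        have h4 : (0:ℝ) ≤ (q / (q - 1)) ^ nu :=
          Real.rpow_nonneg (div_nonneg (by linarith) (by linarith)) _
        calc Z * p ^ lam / (p - 1) ^ nu
            ≤ C * (p / (p - 1)) ^ nu := h1
          _ ≤ C * (q / (q - 1)) ^ nu := mul_le_mul_of_nonneg_left h3 hC0
          _ = C * ((q / (q - 1)) ^ nu * 1) := by ring
          _ ≤ C * ((q / (q - 1)) ^ nu * ψ q) :=
              mul_le_mul_of_nonneg_left (mul_le_mul_of_nonneg_left hψq1 h4) hC0
      calc eLpNorm g (ENNReal.ofReal p) μ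
          ≤ ENNReal.ofReal (Z * p ^ lam / (p - 1) ^ nu) *
              eLpNorm f (ENNReal.ofReal p) μ := hQ p ⟨hp1, hp.2⟩
        _ ≤ ENNReal.ofReal (Z * p ^ lam / (p - 1) ^ nu) *
              (ENNReal.ofReal (ψ p) * N) := mul_le_mul_right (hfb p hp) _
        _ = ENNReal.ofReal (Z * p ^ lam / (p - 1) ^ nu) * N * ENNReal.ofReal (ψ p) := by
            ring
        _ ≤ ENNReal.ofReal (C * ((q / (q - 1)) ^ nu * ψ q)) * N * ENNReal.ofReal (ψ p) :=
            mul_le_mul_left (mul_le_mul_left (ENNReal.ofReal_le_ofReal hreal) N) _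
  -- assemble
  refine iSup₂_le fun p hp => ?_
  refine ENNReal.le_of_forall_pos_le_add fun ε hε _ => ?_
  set M := N.toReal with hMdef
  have hM0 : (0:ℝ) ≤ M := ENNReal.toReal_nonneg
  have hNM : N = ENNReal.ofReal M := (ENNReal.ofReal_toReal hN.ne).symm
  set δ := (ε : ℝ) / (C * M + 1) with hδdef
  have hδ0 : (0:ℝ) < δ := div_pos (by exact_mod_cast hε) (by positivity)
  obtain ⟨k, hkS, hk⟩ := (csInf_lt_iff hBdd hSne).mp (by linarith : sInf S < K + δ)
  have hterm : eLpNorm g (ENNReal.ofReal p) μ / ENNReal.ofReal (ψ p) ≤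
      ENNReal.ofReal (C * k) * N := by
    obtain ⟨q, hq, rfl⟩ := hkS
    exact key p hp q hq
  have hstep : ENNReal.ofReal (C * k) * N ≤
      ENNReal.ofReal (C * K) * N + ENNReal.ofReal (C * δ) * N := by
    calc ENNReal.ofReal (C * k) * N
        ≤ ENNReal.ofReal (C * K + C * δ) * N := by
          refine mul_le_mul_left (ENNReal.ofReal_le_ofReal ?_) N
          nlinarith [mul_le_mul_of_nonneg_left hk.le hC0]
      _ ≤ (ENNReal.ofReal (C * K) + ENNReal.ofReal (C * δ)) * N :=
          mul_le_mul_left ENNReal.ofReal_add_le N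
      _ = ENNReal.ofReal (C * K) * N + ENNReal.ofReal (C * δ) * N := add_mul _ _ _
  have hsmall : ENNReal.ofReal (C * δ) * N ≤ (ε : ℝ≥0∞) := by
    rw [hNM, ← ENNReal.ofReal_mul (by positivity)]
    rw [← ENNReal.ofReal_coe_nnreal (p := ε)]
    apply ENNReal.ofReal_le_ofReal
    rw [hδdef]
    rw [div_eq_mul_inv]
    have hεr : (0:ℝ) ≤ (ε : ℝ) := ε.coe_nonneg
    have h1 : C * ((ε : ℝ) * (C * M + 1)⁻¹) * M = (ε : ℝ) * (C * M * (C * M + 1)⁻¹) := by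
      ring
    rw [h1]
    have h2 : C * M * (C * M + 1)⁻¹ ≤ 1 := by
      rw [mul_inv_le_iff₀ (by positivity)]
      linarith
    nlinarith
  calc eLpNorm g (ENNReal.ofReal p) μ / ENNReal.ofReal (ψ p)
      ≤ ENNReal.ofReal (C * k) * N := hterm
    _ ≤ ENNReal.ofReal (C * K) * N + ENNReal.ofReal (C * δ) * N := hstep
    _ ≤ ENNReal.ofReal (C * K) * N + ε := add_le_add_right hsmall _
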